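/- arXiv:1807.09826 — 4 statements merged into one kernel-verified Lean document; each statement's English description precedes it below -/
import Mathlib

section
/- Let R be a principal ideal domain, p ∈ R a prime element, and set Q := R/(p). Let F be a free R-module, U ⊆ F a submodule, and j : U → F the inclusion map. Then the induced map Q ⊗_R j : Q ⊗_R U → Q ⊗_R F is injective if and only if for every u ∈ U the following equivalence holds: u is divisible by p in U if and only if u is divisible by p in F. -/
open Pointwise

lemma mem_smul_top_iff_aux {R M : Type*} [CommRing R] [AddCommGroup M] [Module R M]
    (p : R) (x : M) : x ∈ p • (⊤ : Submodule R M) ↔ ∃ y : M, x = p • y := by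
  constructor
  · intro hx
    rw [← SetLike.mem_coe, Submodule.coe_pointwise_smul] at hx
    obtain ⟨y, -, hy⟩ := hx
    exact ⟨y, hy.symm⟩
  · rintro ⟨y, rfl⟩
    exact Submodule.smul_mem_pointwise_smul y p ⊤ trivial

/-- For a PID `R`, a prime `p ∈ R`, `Q := R/(p)`, a free `R`-module `F` and a
submodule `U ⊆ F` with inclusion `j : U → F`, the map `Q ⊗ j : Q ⊗[R] U → Q ⊗[R] F` is
injective iff for every `u ∈ U`: `u` is divisible by `p` in `U` iff `u` is divisible by `p`
in `F`. -/
theorem stmt_0 {R F : Type*} [CommRing R] [IsDomain R] [IsPrincipalIdealRing R]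
    [AddCommGroup F] [Module R F] [Module.Free R F]
    {p : R} (hp : Prime p) (U : Submodule R F) :
    Function.Injective
      (LinearMap.lTensor (R ⧸ Ideal.span {p}) U.subtype) ↔
    ∀ u : U, (∃ u' : U, u = p • u') ↔ (∃ f : F, (u : F) = p • f) := by
  have hcomp : ∀ x, (QuotSMulTop.equivQuotTensor p F) (QuotSMulTop.map p U.subtype x)
      = LinearMap.lTensor (R ⧸ Ideal.span {p}) U.subtype
        (QuotSMulTop.equivQuotTensor p U x) :=
    fun x => DFunLike.congr_fun (QuotSMulTop.equivQuotTensor_naturality p U.subtype) x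
  have key : Function.Injective (LinearMap.lTensor (R ⧸ Ideal.span {p}) U.subtype) ↔
      Function.Injective (QuotSMulTop.map p U.subtype) := by
    constructor
    · intro h x y hxy
      apply (QuotSMulTop.equivQuotTensor p U).injective
      apply h
      rw [← hcomp, ← hcomp, hxy]
    · intro h x y hxy
      obtain ⟨x, rfl⟩ := (QuotSMulTop.equivQuotTensor p U).surjective x
      obtain ⟨y, rfl⟩ := (QuotSMulTop.equivQuotTensor p U).surjective y
      rw [← hcomp, ← hcomp] at hxy
      exact congrArg _ (h ((QuotSMulTop.equivQuotTensor p F).injective hxy))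
  rw [key]
  constructor
  · intro h u
    constructor
    · rintro ⟨u', rfl⟩
      exact ⟨u', by simp⟩
    · rintro ⟨f, hf⟩
      have h1 : QuotSMulTop.map p U.subtype (Submodule.Quotient.mk u) = 0 := by
        rw [QuotSMulTop.map_apply_mk, Submodule.Quotient.mk_eq_zero]
        exact (mem_smul_top_iff_aux p ((U.subtype) u)).mpr ⟨f, hf⟩
      have h2 : (Submodule.Quotient.mk u : QuotSMulTop p U) = 0 := by
        apply h
        rw [h1, map_zero]
      rw [Submodule.Quotient.mk_eq_zero, mem_smul_top_iff_aux] at h2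
      exact h2
  · intro h
    rw [← LinearMap.ker_eq_bot, eq_bot_iff]
    rintro x hx
    obtain ⟨u, rfl⟩ := Submodule.Quotient.mk_surjective _ x
    rw [LinearMap.mem_ker, QuotSMulTop.map_apply_mk, Submodule.Quotient.mk_eq_zero,
      mem_smul_top_iff_aux] at hx
    obtain ⟨f, hf⟩ := hx
    obtain ⟨u', hu'⟩ := (h u).mpr ⟨f, hf⟩
    simp only [Submodule.mem_bot, Submodule.Quotient.mk_eq_zero, mem_smul_top_iff_aux]
    exact ⟨u', hu'⟩
end

section
/- Let R be a principal ideal domain, p ∈ R a prime element, and set Q := R/(p). Let F be a free R-module, U ⊆ F a submodule, and j : U → F the inclusion map. Then the induced map Q ⊗_R j : Q ⊗_R U → Q ⊗_R F is injective if and only if for every f ∈ F with p•f ∈ U one has f ∈ U (equivalently, the quotient module F/U has no nonzero element annihilated by p). -/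
open TensorProduct Pointwise


private lemma mem_iff {R M : Type*} [CommRing R] [AddCommGroup M] [Module R M]
    {p : R} (_hp : Prime p) (x : M) :
    x ∈ Ideal.span {p} • (⊤ : Submodule R M) ↔ ∃ m : M, p • m = x := by
  constructor
  · intro hx
    refine Submodule.smul_induction_on hx ?_ ?_
    · rintro r hr m -
      obtain ⟨c, rfl⟩ := (Ideal.mem_span_singleton).mp hr
      exact ⟨c • m, by rw [← mul_smul]⟩
    · rintro x y ⟨a, rfl⟩ ⟨b, rfl⟩
      exact ⟨a + b, by rw [smul_add]⟩
  · rintro ⟨m, rfl⟩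
    exact Submodule.smul_mem_smul (Ideal.mem_span_singleton_self p) trivial

/-- For a PID `R`, a prime `p ∈ R`, `Q := R/(p)`, a free `R`-module `F` and a
submodule `U ⊆ F` with inclusion `j : U → F`, the map `Q ⊗ j : Q ⊗[R] U → Q ⊗[R] F` is
injective iff every `f ∈ F` with `p • f ∈ U` satisfies `f ∈ U` (i.e. `F/U` has no nonzero
element annihilated by `p`). -/
theorem stmt_2 {R F : Type*} [CommRing R] [IsDomain R] [IsPrincipalIdealRing R]
    [AddCommGroup F] [Module R F] [Module.Free R F]
    {p : R} (hp : Prime p) (U : Submodule R F) :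
    Function.Injective
      (LinearMap.lTensor (R ⧸ Ideal.span {p}) U.subtype) ↔
    ∀ f : F, p • f ∈ U → f ∈ U := by
  set I : Ideal R := Ideal.span {p}
  have hle : Submodule.map U.subtype (I • (⊤ : Submodule R U)) ≤ I • (⊤ : Submodule R F) := by
    rw [Submodule.map_smul'']
    exact Submodule.smul_mono le_rfl le_top
  have hle' : I • (⊤ : Submodule R U) ≤ (I • (⊤ : Submodule R F)).comap U.subtype := by
    rw [← Submodule.map_le_iff_le_comap]; exact hle
  set g : (U ⧸ (I • (⊤ : Submodule R U))) →ₗ[R] (F ⧸ (I • (⊤ : Submodule R F))) :=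
    Submodule.mapQ _ _ U.subtype hle' with hg_def
  have hcomm : (quotTensorEquivQuotSMul F I).toLinearMap ∘ₗ
      (LinearMap.lTensor (R ⧸ I) U.subtype) =
      g ∘ₗ (quotTensorEquivQuotSMul U I).toLinearMap := by
    ext u
    simp only [LinearMap.coe_comp, Function.comp_apply, AlgebraTensorModule.curry_apply,
      curry_apply, LinearMap.coe_restrictScalars, LinearEquiv.coe_coe,
      LinearMap.lTensor_tmul, Submodule.coe_subtype]
    rw [show ((Submodule.mkQ I) 1 : R ⧸ I) = Ideal.Quotient.mk I 1 from rfl,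
      quotTensorEquivQuotSMul_mk_tmul, quotTensorEquivQuotSMul_mk_tmul]
    simp [g, Submodule.mapQ_apply]
  have key : Function.Injective (LinearMap.lTensor (R ⧸ I) U.subtype) ↔
      Function.Injective g := by
    constructor
    · intro h
      have h2 : Function.Injective ((quotTensorEquivQuotSMul F I).toLinearMap ∘ₗ
          (LinearMap.lTensor (R ⧸ I) U.subtype)) :=
        (quotTensorEquivQuotSMul F I).injective.comp h
      rw [hcomm] at h2
      have h3 := h2.comp (quotTensorEquivQuotSMul U I).symm.injective
      have : ⇑(g ∘ₗ (quotTensorEquivQuotSMul U I).toLinearMap) ∘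
          ⇑(quotTensorEquivQuotSMul U I).symm = ⇑g := by
        ext x; simp
      rwa [this] at h3
    · intro h
      have h2 : Function.Injective (g ∘ₗ (quotTensorEquivQuotSMul U I).toLinearMap) :=
        h.comp (quotTensorEquivQuotSMul U I).injective
      rw [← hcomm] at h2
      exact (Function.Injective.of_comp (f := (quotTensorEquivQuotSMul F I))) h2
  rw [key]
  have memF : ∀ x : F, x ∈ I • (⊤ : Submodule R F) ↔ ∃ f : F, p • f = x := fun x => mem_iff hp x
  have memU : ∀ x : U, x ∈ I • (⊤ : Submodule R U) ↔ ∃ u : U, p • u = x := fun x => mem_iff hp x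
  have tf : ∀ f : F, p • f = 0 → f = 0 := fun f hf =>
    (smul_eq_zero.mp hf).resolve_left hp.ne_zero
  constructor
  · intro hg f hf
    have h1 : ((⟨p • f, hf⟩ : U) : F) ∈ I • (⊤ : Submodule R F) := (memF _).mpr ⟨f, rfl⟩
    have h2 : g (Submodule.Quotient.mk ⟨p • f, hf⟩) = 0 := by
      simp only [g, Submodule.mapQ_apply, Submodule.Quotient.mk_eq_zero]
      exact h1
    have h3 : (⟨p • f, hf⟩ : U) ∈ I • (⊤ : Submodule R U) := by
      have := hg (a₁ := Submodule.Quotient.mk ⟨p • f, hf⟩) (a₂ := 0) (by simpa using h2)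
      rwa [Submodule.Quotient.mk_eq_zero] at this
    obtain ⟨u, hu⟩ := (memU _).mp h3
    have hpu : p • (f - (u : F)) = 0 := by
      have : p • (u : F) = p • f := congrArg Subtype.val hu
      rw [smul_sub, this, sub_self]
    have : f = (u : F) := by
      have := tf _ hpu; rwa [sub_eq_zero] at this
    exact this ▸ u.2
  · intro h
    rw [← LinearMap.ker_eq_bot, eq_bot_iff]
    rintro x hx
    obtain ⟨u, rfl⟩ := Submodule.Quotient.mk_surjective _ x
    rw [LinearMap.mem_ker, hg_def, Submodule.mapQ_apply, Submodule.Quotient.mk_eq_zero] at hx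
    obtain ⟨f, hf⟩ := (memF _).mp hx
    have hfU : f ∈ U := h f (by rw [hf]; exact u.2)
    have : (⟨f, hfU⟩ : U) ∈ (⊤ : Submodule R U) := trivial
    have hu : u ∈ I • (⊤ : Submodule R U) := (memU u).mpr ⟨⟨f, hfU⟩, Subtype.ext hf⟩
    simpa [Submodule.Quotient.mk_eq_zero] using hu
end

section
/- Let R be a principal ideal domain, p ∈ R a prime element, and set Q := R/(p). Let F be a free R-module, I a nonempty index set with a distinguished element i₀, and (A_i)_{i ∈ I} a family of submodules of F such that for every j ∈ I one has (p•A_{i₀}) ∩ A_j = A_{i₀} ∩ (p•A_j). Set U := ⋂_{i ∈ I} A_i, so U ⊆ A_{i₀}. Then the map Q ⊗_R U → Q ⊗_R A_{i₀} induced by tensoring the inclusion U → A_{i₀} with Q is injective. -/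
open Pointwise

/-- Let `R` be a PID, `p ∈ R` prime, `Q := R/(p)`, `F` a free `R`-module, `I` an
index set with a distinguished element `i₀`, and `(A i)_{i ∈ I}` a family of submodules of `F`
with `(p • A i₀) ⊓ A j = A i₀ ⊓ (p • A j)` for all `j`. Set `U := ⨅ i, A i ⊆ A i₀`. Then the
map `Q ⊗[R] U → Q ⊗[R] A i₀` induced by the inclusion is injective. -/
theorem stmt_4 {R F : Type*} [CommRing R] [IsDomain R] [IsPrincipalIdealRing R]
    [AddCommGroup F] [Module R F] [Module.Free R F]
    {p : R} (hp : Prime p) {I : Type*} (i₀ : I) (A : I → Submodule R F)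
    (h : ∀ j : I, (p • A i₀) ⊓ A j = A i₀ ⊓ (p • A j)) :
    Function.Injective
      (LinearMap.lTensor (R ⧸ Ideal.span {p})
        (Submodule.inclusion (iInf_le A i₀ : (⨅ i, A i) ≤ A i₀))) := by
  set U : Submodule R F := ⨅ i, A i with hU
  set f : U →ₗ[R] A i₀ := Submodule.inclusion (iInf_le A i₀) with hf
  set NU : Submodule R U := Ideal.span {p} • ⊤ with hNU
  set NA : Submodule R (A i₀) := Ideal.span {p} • ⊤ with hNA
  have hle : NU ≤ NA.comap f := by
    rw [hNU, Submodule.smul_le]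
    intro r hr u _
    rw [Submodule.mem_comap, map_smul]
    exact Submodule.smul_mem_smul hr trivial
  set g : (U ⧸ NU) →ₗ[R] (A i₀ ⧸ NA) := Submodule.mapQ NU NA f hle with hg
  set e₁ := TensorProduct.quotTensorEquivQuotSMul U (Ideal.span {p}) with he₁
  set e₂ := TensorProduct.quotTensorEquivQuotSMul (A i₀) (Ideal.span {p}) with he₂
  have key : e₂.toLinearMap ∘ₗ LinearMap.lTensor (R ⧸ Ideal.span {p}) f
      = g ∘ₗ e₁.toLinearMap := by
    apply TensorProduct.ext'
    intro q u
    obtain ⟨r, rfl⟩ := Ideal.Quotient.mk_surjective q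
    simp [he₁, he₂, hg, TensorProduct.quotTensorEquivQuotSMul_mk_tmul,
      Submodule.mapQ_apply, map_smul]
  have hginj : Function.Injective g := by
    rw [← LinearMap.ker_eq_bot, Submodule.eq_bot_iff]
    intro x hx
    obtain ⟨u, rfl⟩ := Submodule.mkQ_surjective NU x
    rw [LinearMap.mem_ker, hg, Submodule.mkQ_apply, Submodule.mapQ_apply, Submodule.Quotient.mk_eq_zero,
      hNA, Submodule.ideal_span_singleton_smul] at hx
    obtain ⟨a, -, ha⟩ := Set.mem_smul_set.mp hx
    -- `ha : p • a = f u` in `A i₀`; pass to `F`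
    have haF : p • (a : F) = (u : F) := congrArg Subtype.val ha
    -- for each `j`, `a ∈ A j`
    have hmemU : (a : F) ∈ U := by
      rw [hU, Submodule.mem_iInf]
      intro j
      have h1 : (u : F) ∈ (p • A i₀) ⊓ A j := by
        constructor
        · rw [← haF]
          exact Submodule.smul_mem_pointwise_smul _ _ _ a.2
        · exact (Submodule.mem_iInf A).mp u.2 j
      rw [h j] at h1
      obtain ⟨aj, hajm, haj⟩ := Set.mem_smul_set.mp h1.2
      have : (a : F) = aj := by
        apply smul_right_injective F hp.ne_zero
        show p • (a : F) = p • aj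
        rw [haF, haj]
      rw [this]
      exact hajm
    have hu : u = p • (⟨(a : F), hmemU⟩ : U) := by
      apply Subtype.ext
      exact haF.symm
    rw [Submodule.mkQ_apply, Submodule.Quotient.mk_eq_zero, hNU, Submodule.ideal_span_singleton_smul, hu]
    exact Submodule.smul_mem_pointwise_smul _ _ _ trivial
  intro x y hxy
  apply e₁.injective
  apply hginj
  have kx := DFunLike.congr_fun key x
  have ky := DFunLike.congr_fun key y
  simp only [LinearMap.coe_comp, Function.comp_apply, LinearEquiv.coe_coe] at kx ky
  rw [← kx, ← ky]
  exact congrArg ⇑e₂ hxy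
end

section
/- Let R be a principal ideal domain, p ∈ R a prime element, and set Q := R/(p). Let B be a free R-module and A ⊆ B a submodule. Suppose the quotient module N := B/A is an internal direct sum N = ⊕_{g ∈ G} N_g (over an arbitrary index set G) of finitely generated submodules N_g, and that p•N = N. Then the map Q ⊗_R A → Q ⊗_R B induced by tensoring the inclusion A → B with Q is bijective. -/
open Pointwise

/-- Let `R` be a PID, `p ∈ R` prime, `Q := R/(p)`, `B` a free `R`-module, and
`A ⊆ B` a submodule. Suppose the quotient `N := B/A` is the internal direct sum of a family
of finitely generated submodules `(N g)_{g ∈ G}` and that `p • N = N`. Then the map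
`Q ⊗[R] A → Q ⊗[R] B` induced by the inclusion `A → B` is bijective. -/
theorem stmt_5 {R B : Type*} [CommRing R] [IsDomain R] [IsPrincipalIdealRing R]
    [AddCommGroup B] [Module R B] [Module.Free R B]
    {p : R} (hp : Prime p) (A : Submodule R B)
    {G : Type*} [DecidableEq G] (N : G → Submodule R (B ⧸ A))
    (hint : DirectSum.IsInternal N) (hfg : ∀ g, (N g).FG)
    (hpN : p • (⊤ : Submodule R (B ⧸ A)) = ⊤) :
    Function.Bijective
      (LinearMap.lTensor (R ⧸ Ideal.span {p}) A.subtype) := by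
  classical
  -- multiplication by `p` is surjective on `N := B ⧸ A`
  have hsurjN : ∀ n : B ⧸ A, ∃ m, p • m = n := by
    intro n
    have hn : n ∈ p • (⊤ : Submodule R (B ⧸ A)) := by
      rw [hpN]; exact Submodule.mem_top
    rw [← SetLike.mem_coe, Submodule.coe_pointwise_smul] at hn
    obtain ⟨m, -, hm⟩ := hn
    exact ⟨m, hm⟩
  -- the internal direct sum decomposition
  let e : (DirectSum G fun g => N g) ≃ₗ[R] (B ⧸ A) :=
    LinearEquiv.ofBijective (DirectSum.coeLinearMap N) hint
  -- multiplication by `p` is surjective on each `N g`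
  have hsurj_comp : ∀ g : G, Function.Surjective
      (LinearMap.lsmul R (N g) p) := by
    intro g n
    obtain ⟨m, hm⟩ := hsurjN (n : B ⧸ A)
    refine ⟨e.symm m g, ?_⟩
    have h1 : e.symm ((n : B ⧸ A)) = DirectSum.of (fun g => N g) g n := by
      apply e.injective
      simp [e, LinearEquiv.ofBijective_apply, DirectSum.coeLinearMap_of]
      exact (DirectSum.coeLinearMap_of N g n).symm
    have h2 : e.symm (p • m) = p • e.symm m := map_smul _ _ _
    rw [hm, h1] at h2
    have h3 := congrArg (fun x => x g) h2
    simp only [DirectSum.of_eq_same, DirectSum.smul_apply] at h3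
    simpa using h3.symm
  -- hence injective on each `N g` (f.g. module, surjective endomorphism)
  have hinj_comp : ∀ g : G, Function.Injective (LinearMap.lsmul R (N g) p) := by
    intro g
    have : Module.Finite R (N g) := by
      rw [Module.Finite.iff_fg]
      exact hfg g
    exact OrzechProperty.injective_of_surjective_endomorphism _ (hsurj_comp g)
  -- hence multiplication by `p` is injective on `N`
  have hinjN : ∀ n : B ⧸ A, p • n = 0 → n = 0 := by
    intro n hn
    have h : p • e.symm n = 0 := by
      rw [← map_smul, hn, map_zero]
    have h2 : e.symm n = 0 := by
      refine DFinsupp.ext fun g => ?_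
      have hg : p • (e.symm n g) = 0 := by
        have := congrArg (fun x => x g) h
        simpa [DirectSum.smul_apply] using this
      have := hinj_comp g (a₂ := 0) (by simpa using hg)
      simpa using this
    have := congrArg e h2
    simpa using this
  -- key facts on `B`
  have key_surj : ∀ b : B, ∃ a ∈ A, ∃ b' : B, b = a + p • b' := by
    intro b
    obtain ⟨m, hm⟩ := hsurjN (Submodule.Quotient.mk b)
    obtain ⟨b', rfl⟩ := Submodule.Quotient.mk_surjective A m
    have : Submodule.Quotient.mk (p := A) (b - p • b') = 0 := by
      rw [Submodule.Quotient.mk_sub]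
      rw [show Submodule.Quotient.mk (p := A) (p • b') = p • Submodule.Quotient.mk b' from
        Submodule.Quotient.mk_smul A p b', hm, sub_self]
    have hmem : b - p • b' ∈ A := (Submodule.Quotient.mk_eq_zero A).mp this
    exact ⟨b - p • b', hmem, b', by abel⟩
  have key_inj : ∀ a ∈ A, ∀ b : B, a = p • b → b ∈ A := by
    intro a ha b hab
    have h0 : p • Submodule.Quotient.mk (p := A) b = 0 := by
      rw [← Submodule.Quotient.mk_smul A p b, ← hab, Submodule.Quotient.mk_eq_zero]
      exact ha
    have := hinjN _ h0
    exact (Submodule.Quotient.mk_eq_zero A).mp this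
  -- set up the quotient description of the tensor products
  set I : Ideal R := Ideal.span {p} with hI
  let qA := TensorProduct.quotTensorEquivQuotSMul A I
  let qB := TensorProduct.quotTensorEquivQuotSMul B I
  have hle : (I • ⊤ : Submodule R A) ≤ (I • ⊤ : Submodule R B).comap A.subtype := by
    rw [← Submodule.map_le_iff_le_comap, Submodule.map_smul'']
    exact Submodule.smul_mono le_rfl le_top
  let φ : (A ⧸ (I • ⊤ : Submodule R A)) →ₗ[R] (B ⧸ (I • ⊤ : Submodule R B)) :=
    Submodule.mapQ _ _ A.subtype hle
  -- membership in `I • ⊤` means divisibility by `p`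
  have hmemI : ∀ x : B, x ∈ (I • ⊤ : Submodule R B) ↔ ∃ y : B, x = p • y := by
    intro x
    rw [hI, Submodule.ideal_span_singleton_smul, ← SetLike.mem_coe,
      Submodule.coe_pointwise_smul]
    constructor
    · rintro ⟨y, -, rfl⟩; exact ⟨y, rfl⟩
    · rintro ⟨y, rfl⟩; exact ⟨y, Submodule.mem_top, rfl⟩
  -- `φ` is bijective
  have hφ : Function.Bijective φ := by
    constructor
    · rw [← LinearMap.ker_eq_bot, Submodule.eq_bot_iff]
      intro x hx
      obtain ⟨a, rfl⟩ := Submodule.Quotient.mk_surjective _ x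
      have hx' : (a : B) ∈ (I • ⊤ : Submodule R B) := by
        have : φ (Submodule.Quotient.mk a) = 0 := hx
        rw [Submodule.mapQ_apply] at this
        exact (Submodule.Quotient.mk_eq_zero _).mp this
      obtain ⟨y, hy⟩ := (hmemI _).mp hx'
      have hyA : y ∈ A := key_inj _ a.2 y hy
      have ha : a = p • (⟨y, hyA⟩ : A) := Subtype.ext (by simpa using hy)
      rw [Submodule.Quotient.mk_eq_zero, ha]
      exact Submodule.smul_mem_smul (Ideal.mem_span_singleton_self p) Submodule.mem_top
    · intro x
      obtain ⟨b, rfl⟩ := Submodule.Quotient.mk_surjective _ x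
      obtain ⟨a, ha, b', hb⟩ := key_surj b
      refine ⟨Submodule.Quotient.mk ⟨a, ha⟩, ?_⟩
      rw [Submodule.mapQ_apply]
      refine (Submodule.Quotient.eq _).mpr ?_
      have : A.subtype ⟨a, ha⟩ - b = -(p • b') := by
        simp only [Submodule.subtype_apply, hb]; abel
      rw [this]
      exact Submodule.neg_mem _
        (Submodule.smul_mem_smul (Ideal.mem_span_singleton_self p) Submodule.mem_top)
  -- the commutative square
  have hcomm : ∀ x, qB (LinearMap.lTensor (R ⧸ I) A.subtype (qA.symm x)) = φ x := by
    intro x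
    obtain ⟨a, rfl⟩ := Submodule.Quotient.mk_surjective _ x
    rw [TensorProduct.quotTensorEquivQuotSMul_symm_mk,
      show (1 : R ⧸ I) = Ideal.Quotient.mk I 1 from (map_one _).symm,
      LinearMap.lTensor_tmul, TensorProduct.quotTensorEquivQuotSMul_mk_tmul,
      Submodule.mapQ_apply, one_smul]
  -- conclude
  have hbij : Function.Bijective
      (⇑qB ∘ ⇑(LinearMap.lTensor (R ⧸ I) A.subtype) ∘ ⇑qA.symm) := by
    have : (⇑qB ∘ ⇑(LinearMap.lTensor (R ⧸ I) A.subtype) ∘ ⇑qA.symm) = ⇑φ :=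
      funext hcomm
    rw [this]; exact hφ
  have h2 := (qB.symm.bijective.comp hbij).comp qA.bijective
  convert h2 using 1
  ext x
  simp
end
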